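/- In a distributive almost-lattice I, an element i belongs to the kernel ker(I) = L ∩ R if and only if i ∨ j exists for every j ∈ I. -/
import Mathlib


/-- A distributive almost-lattice: a partial order with all binary meets such that
joins exist for pairs with an upper bound, of any three elements two have an upper
bound, the distributive laws hold whenever both sides exist, and properties (v), (vi). -/
structure DistribAlmostLattice (I : Type*) [SemilatticeInf I] : Prop where
  join_exists : ∀ i j : I, (∃ k, i ≤ k ∧ j ≤ k) → ∃ k, IsLUB {i, j} k
  two_of_three : ∀ i₀ i₁ i₂ : I,
    (∃ k, i₀ ≤ k ∧ i₁ ≤ k) ∨ (∃ k, i₀ ≤ k ∧ i₂ ≤ k) ∨ (∃ k, i₁ ≤ k ∧ i₂ ≤ k)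
  distrib_join : ∀ i j j' a b c : I, IsLUB {i, j} a → IsLUB {i, j'} b →
    IsLUB {i, j ⊓ j'} c → c = a ⊓ b
  distrib_meet : ∀ i j j' a b : I, IsLUB {j, j'} a →
    IsLUB {i ⊓ j, i ⊓ j'} b → b = i ⊓ a
  no_ub_cases : ∀ i j j' : I, ¬ (∃ k, i ≤ k ∧ j ≤ k) →
    ((¬ ∃ k, i ≤ k ∧ j' ≤ k) ∧ ¬ ∃ k, i ≤ k ∧ j ⊓ j' ≤ k) ∨
    (∃ k, IsLUB {i, j'} k ∧ IsLUB {i, j ⊓ j'} k)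
  meet_join_eq : ∀ i j j' : I, ¬ (∃ k, j ≤ k ∧ j' ≤ k) → IsLUB {i ⊓ j, i ⊓ j'} i

/-- In a distributive almost-lattice with left/right decomposition `L`, `R` (downward
closed, join-closed, covering `I`, balanced, with no joins across the parts), an element
`i` belongs to the kernel `L ∩ R` if and only if `i ∨ j` exists for every `j`. -/
theorem stmt2 {I : Type*} [SemilatticeInf I] (h : DistribAlmostLattice I)
    (L R : Set I)
    (hLdc : ∀ i ∈ L, ∀ j, j ≤ i → j ∈ L)
    (hRdc : ∀ i ∈ R, ∀ j, j ≤ i → j ∈ R)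
    (hLjoin : ∀ i ∈ L, ∀ j ∈ L, ∃ k, IsLUB {i, j} k ∧ k ∈ L)
    (hRjoin : ∀ i ∈ R, ∀ j ∈ R, ∃ k, IsLUB {i, j} k ∧ k ∈ R)
    (hunion : L ∪ R = Set.univ)
    (hbal : (L \ (L ∩ R)).Nonempty ↔ (R \ (L ∩ R)).Nonempty)
    (hcross : ∀ i ∈ L \ (L ∩ R), ∀ j ∈ R \ (L ∩ R), ¬ ∃ k, IsLUB {i, j} k)
    (i : I) :
    i ∈ L ∩ R ↔ ∀ j : I, ∃ k, IsLUB {i, j} k := by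
  constructor
  · rintro ⟨hiL, hiR⟩ j
    have hj : j ∈ L ∪ R := by rw [hunion]; trivial
    rcases hj with hj | hj
    · obtain ⟨k, hk, -⟩ := hLjoin i hiL j hj
      exact ⟨k, hk⟩
    · obtain ⟨k, hk, -⟩ := hRjoin i hiR j hj
      exact ⟨k, hk⟩
  · intro hall
    by_contra hker
    have hi : i ∈ L ∪ R := by rw [hunion]; trivial
    rcases hi with hi | hi
    · have hL : i ∈ L \ (L ∩ R) := ⟨hi, hker⟩
      obtain ⟨j, hj⟩ := hbal.mp ⟨i, hL⟩
      exact hcross i hL j hj (hall j)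
    · have hR : i ∈ R \ (L ∩ R) := ⟨hi, hker⟩
      obtain ⟨j, hj⟩ := hbal.mpr ⟨i, hR⟩
      have := hcross j hj i hR
      rw [Set.pair_comm j i] at this
      exact this (hall j)
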